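/- Under the cocycle equation ρ_{t+s} = ρ_t ∗ T_t ρ_s with t ↦ ρ_t continuous at 0, the triangular array (T_{jt/n} ρ_{t/n})_{0≤j≤n-1} is infinitesimal: for every ε > 0 and t > 0, lim_{n→∞} max_{0≤j≤n-1} (T_{jt/n} ρ_{t/n})({x : ‖x‖ ≥ ε}) = 0. -/

import Mathlib

open MeasureTheory Filter Topology

lemma aux_small_mass
    {E : Type*} [NormedAddCommGroup E] [NormedSpace ℝ E]
    [MeasurableSpace E] [BorelSpace E]
    (ρ : ℝ → Measure E) (hρ : ∀ t, IsProbabilityMeasure (ρ t))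
    (hcont : ∀ f : BoundedContinuousFunction E ℝ,
      Filter.Tendsto (fun t => ∫ x, f x ∂(ρ t)) (nhdsWithin 0 (Set.Ici (0 : ℝ)))
        (nhds (f 0)))
    {δ : ℝ} (hδ : 0 < δ) :
    Filter.Tendsto (fun s => ρ s {x : E | δ ≤ ‖x‖})
      (nhdsWithin 0 (Set.Ici (0 : ℝ))) (nhds 0) := by
  set g : E → ℝ := fun x => min 1 (2 * ‖x‖ / δ) with hgdef
  have hg0 : ∀ x, 0 ≤ g x := fun x => le_min zero_le_one (by positivity)
  have hg1 : ∀ x, g x ≤ 1 := fun x => min_le_left _ _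
  have hgc : Continuous g := continuous_const.min (by fun_prop)
  let f : BoundedContinuousFunction E ℝ :=
    ⟨⟨g, hgc⟩, 2, fun x y => by
      calc dist (g x) (g y) ≤ dist (g x) 0 + dist 0 (g y) := dist_triangle _ _ _
        _ ≤ 1 + 1 := by
            rw [Real.dist_eq, Real.dist_eq, sub_zero, zero_sub, abs_neg]
            gcongr <;> exact abs_le.mpr ⟨by linarith [hg0 x, hg0 y], by first | exact hg1 x | exact hg1 y⟩
        _ = 2 := by norm_num⟩
  have hf0 : f 0 = 0 := by
    show g 0 = 0
    simp [hgdef, hδ.le]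
  have hA : MeasurableSet {x : E | δ ≤ ‖x‖} :=
    (isClosed_le continuous_const continuous_norm).measurableSet
  have hbound : ∀ s, ρ s {x : E | δ ≤ ‖x‖} ≤ ENNReal.ofReal (∫ x, f x ∂(ρ s)) := by
    intro s
    have h1 : ρ s {x : E | δ ≤ ‖x‖} ≤ ∫⁻ x, ENNReal.ofReal (f x) ∂(ρ s) := by
      rw [← lintegral_indicator_one hA]
      apply lintegral_mono
      intro x
      by_cases hx : x ∈ {x : E | δ ≤ ‖x‖}
      · have hfx : g x = 1 := by
          have : (2:ℝ) ≤ 2 * ‖x‖ / δ := by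
            rw [le_div_iff₀ hδ]
            nlinarith [hx.out]
          simp [hgdef, min_eq_left (by linarith : (1:ℝ) ≤ 2 * ‖x‖ / δ)]
        have hfx' : ENNReal.ofReal (f x) = 1 := by
          rw [show f x = g x from rfl, hfx, ENNReal.ofReal_one]
        simp [hx, hfx']
      · simp [hx, Set.indicator_of_notMem]
    have h2 : ∫⁻ x, ENNReal.ofReal (f x) ∂(ρ s) = ENNReal.ofReal (∫ x, f x ∂(ρ s)) := by
      haveI := hρ s
      exact (MeasureTheory.ofReal_integral_eq_lintegral_ofReal
        (f.integrable (ρ s)) (Filter.Eventually.of_forall hg0)).symm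
    exact h1.trans_eq h2
  have htend : Filter.Tendsto (fun s => ENNReal.ofReal (∫ x, f x ∂(ρ s)))
      (nhdsWithin 0 (Set.Ici (0 : ℝ))) (nhds 0) := by
    have := (ENNReal.continuous_ofReal.tendsto (f 0)).comp (hcont f)
    rwa [hf0, ENNReal.ofReal_zero] at this
  exact tendsto_of_tendsto_of_tendsto_of_le_of_le tendsto_const_nhds htend
    (fun s => zero_le) hbound

/-- Infinitesimality of the triangular array `(T_{jt/n} ρ_{t/n})_{0 ≤ j ≤ n-1}` arising from the
cocycle equation: `max_{0≤j≤n-1} (T_{jt/n} ρ_{t/n})({‖x‖ ≥ ε}) → 0` as `n → ∞`. -/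
theorem cocycle_array_infinitesimal
    {E : Type*} [NormedAddCommGroup E] [NormedSpace ℝ E] [CompleteSpace E]
    [TopologicalSpace.SeparableSpace E] [MeasurableSpace E] [BorelSpace E]
    (T : ℝ → E →L[ℝ] E)
    (hT0 : T 0 = ContinuousLinearMap.id ℝ E)
    (hTsem : ∀ s t : ℝ, 0 ≤ s → 0 ≤ t → T (s + t) = (T s).comp (T t))
    (hTcont : ∀ x : E, ContinuousOn (fun t => T t x) (Set.Ici (0 : ℝ)))
    (ρ : ℝ → Measure E) (hρ : ∀ t, IsProbabilityMeasure (ρ t))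
    (hcoc : ∀ s t : ℝ, 0 ≤ s → 0 ≤ t →
      ρ (t + s) = (ρ t).conv ((ρ s).map (T t)))
    (hcont : ∀ f : BoundedContinuousFunction E ℝ,
      Filter.Tendsto (fun t => ∫ x, f x ∂(ρ t)) (nhdsWithin 0 (Set.Ici (0 : ℝ)))
        (nhds (f 0))) :
    ∀ ε : ℝ, 0 < ε → ∀ t : ℝ, 0 < t →
      Filter.Tendsto
        (fun n : ℕ =>
          (Finset.range n).sup
            (fun j => ((ρ (t / n)).map (T ((j : ℝ) * t / n))) {x : E | ε ≤ ‖x‖}))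
        Filter.atTop (nhds 0) := by
  intro ε hε t ht
  obtain ⟨C, hC⟩ : ∃ C, ∀ i : Set.Icc (0:ℝ) t, ‖T i‖ ≤ C := by
    apply banach_steinhaus
    intro x
    obtain ⟨C, hC⟩ := (isCompact_Icc (a := (0:ℝ)) (b := t)).exists_bound_of_continuousOn
      ((hTcont x).mono Set.Icc_subset_Ici_self)
    exact ⟨C, fun i => hC i i.2⟩
  set M := max C 1 with hMdef
  have hM1 : 0 < M := lt_of_lt_of_le one_pos (le_max_right _ _)
  have hMb : ∀ s, s ∈ Set.Icc (0:ℝ) t → ‖T s‖ ≤ M :=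
    fun s hs => (hC ⟨s, hs⟩).trans (le_max_left _ _)
  have hδ : 0 < ε / M := div_pos hε hM1
  have hA : MeasurableSet {x : E | ε ≤ ‖x‖} :=
    (isClosed_le continuous_const continuous_norm).measurableSet
  have key := aux_small_mass ρ hρ hcont hδ
  have hseq : Filter.Tendsto (fun n : ℕ => t / n) atTop (nhdsWithin 0 (Set.Ici 0)) := by
    apply tendsto_nhdsWithin_of_tendsto_nhds_of_eventually_within
    · exact tendsto_const_div_atTop_nhds_zero_nat t
    · exact Filter.Eventually.of_forall fun n => div_nonneg ht.le (Nat.cast_nonneg n)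
  have keyn := key.comp hseq
  apply tendsto_of_tendsto_of_tendsto_of_le_of_le tendsto_const_nhds keyn
  · intro n; exact zero_le
  · intro n
    apply Finset.sup_le
    intro j hj
    have hjn : j < n := Finset.mem_range.mp hj
    have hn : 0 < (n:ℝ) := by
      have : 0 < n := lt_of_le_of_lt (Nat.zero_le j) hjn
      exact_mod_cast this
    have hs : (j:ℝ) * t / n ∈ Set.Icc (0:ℝ) t := by
      constructor
      · positivity
      · rw [div_le_iff₀ hn]
        have hjle : (j:ℝ) ≤ n := by exact_mod_cast hjn.le
        nlinarith
    rw [Measure.map_apply (T _).continuous.measurable hA]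
    apply measure_mono
    intro x hx
    have h1 : ε ≤ ‖T ((j:ℝ) * t / n) x‖ := hx
    have h2 : ‖T ((j:ℝ) * t / n) x‖ ≤ M * ‖x‖ :=
      ((T _).le_opNorm x).trans (mul_le_mul_of_nonneg_right (hMb _ hs) (norm_nonneg x))
    show ε / M ≤ ‖x‖
    rw [div_le_iff₀ hM1]
    nlinarith
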